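/- Under the blanket assumptions, assume the level set X := {x: F(x) ≤ F(x⁰)} is nonempty and compact, fix α̲ > 0, and define ḡ := sup_{z∈X} g(z), X_{α̲} := {z: dist²(z,X) ≤ ḡ/α̲}, 𝒴 := ∪_{z ∈ X_{α̲}} ∂g(z), and S := {(x,y) ∈ X × 𝒴: η(x,y) > 0}. Then the function η(x,y) = ⟨x,y⟩ − g*(y) is Lipschitz continuous on X × 𝒴 (in particular, g* is Lipschitz continuous on 𝒴 with constant sup{‖x‖₂ + √(ḡ/α̲): x ∈ X}), and consequently Q is continuous on S (with respect to the relative topology of S). -/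

import Mathlib

open Filter Topology Set
open scoped RealInnerProductSpace Pointwise NNReal

noncomputable section

namespace Paper

variable {E : Type*} [NormedAddCommGroup E] [InnerProductSpace ℝ E]

/-- The effective domain of an extended-real-valued function. -/
def edom (φ : E → EReal) : Set E := {x | φ x ≠ ⊤}

/-- A function with values in `(-∞, +∞]` is proper if it is not identically `+∞`
and never takes the value `-∞`. -/
def Proper (φ : E → EReal) : Prop := (∃ x, φ x ≠ ⊤) ∧ ∀ x, φ x ≠ ⊥

/-- The Fréchet subdifferential of `φ` at `x`. -/
def frSubdiff (φ : E → EReal) (x : E) : Set E :=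
  {y | φ x ≠ ⊤ ∧ 0 ≤ Filter.liminf
      (fun z : E => (φ z - φ x - ((⟪y, z - x⟫ : ℝ) : EReal)) * ((‖z - x‖⁻¹ : ℝ) : EReal))
      (𝓝[≠] x)}

/-- The limiting (Mordukhovich) subdifferential of `φ` at `x`. -/
def limSubdiff (φ : E → EReal) (x : E) : Set E :=
  {y | ∃ u v : ℕ → E,
      Tendsto u atTop (𝓝 x) ∧ Tendsto (fun k => φ (u k)) atTop (𝓝 (φ x)) ∧
      (∀ k, v k ∈ frSubdiff φ (u k)) ∧ Tendsto v atTop (𝓝 y)}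

/-- The convex subdifferential of a real-valued function. -/
def cvxSubdiff (g : E → ℝ) (x : E) : Set E :=
  {y | ∀ z, g x + ⟪y, z - x⟫ ≤ g z}

/-- The convex subdifferential of an extended-real-valued function. -/
def cvxSubdiffE (φ : E → EReal) (x : E) : Set E :=
  {y | ∀ z, φ x + ((⟪y, z - x⟫ : ℝ) : EReal) ≤ φ z}

/-- The Fenchel conjugate of an extended-real-valued function. -/
def fconjE (φ : E → EReal) : E → EReal :=
  fun y => ⨆ x : E, (((⟪x, y⟫ : ℝ) : EReal) - φ x)

/-- The Fenchel conjugate of a real-valued function. -/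
def fconj (g : E → ℝ) : E → EReal := fconjE (fun x => ((g x : ℝ) : EReal))

/-- `φ` satisfies the calmness condition at `x` relative to `A`. -/
def CalmAt (φ : E → EReal) (x : E) (A : Set E) : Prop :=
  ∃ κ : ℝ, 0 < κ ∧ ∃ B ∈ 𝓝 x, ∀ u ∈ B ∩ A,
    φ u ≤ φ x + ((κ * ‖u - x‖ : ℝ) : EReal) ∧ φ x ≤ φ u + ((κ * ‖u - x‖ : ℝ) : EReal)

/-- `φ` satisfies the calmness condition on `A`. -/
def CalmOn (φ : E → EReal) (A : Set E) : Prop := ∀ x ∈ A, CalmAt φ x A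

/-- The Kurdyka–Łojasiewicz property of `φ` at `x`. -/
def KLAt (φ : E → EReal) (x : E) : Prop :=
  ∃ ε > (0 : ℝ), ∃ δ > (0 : ℝ), ∃ ϕ ϕ' : ℝ → ℝ,
    ϕ 0 = 0 ∧ ContinuousOn ϕ (Set.Ico 0 ε) ∧ ConcaveOn ℝ (Set.Ico 0 ε) ϕ ∧
    (∀ s ∈ Set.Ioo (0 : ℝ) ε, HasDerivAt ϕ (ϕ' s) s) ∧
    ContinuousOn ϕ' (Set.Ioo 0 ε) ∧ (∀ s ∈ Set.Ioo (0 : ℝ) ε, 0 < ϕ' s) ∧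
    ∀ z ∈ Metric.ball x δ, φ x < φ z → φ z < φ x + (ε : EReal) →
      1 ≤ ENNReal.ofReal (ϕ' ((φ z).toReal - (φ x).toReal)) *
        EMetric.infEdist (0 : E) (limSubdiff φ z)

/-- The KL property of `φ` at `x` with exponent `θ`. -/
def KLExpAt (φ : E → EReal) (x : E) (θ : ℝ) : Prop :=
  ∃ c > (0 : ℝ), ∃ ε > (0 : ℝ), ∃ δ > (0 : ℝ),
    ∀ z ∈ Metric.ball x δ, φ x < φ z → φ z < φ x + (ε : EReal) →
      ENNReal.ofReal (c * ((φ z).toReal - (φ x).toReal) ^ θ) ≤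
        EMetric.infEdist (0 : E) (limSubdiff φ z)

/-- The (possibly multivalued) proximity operator of `φ`. -/
def proxSet (φ : E → EReal) (u : E) : Set E :=
  {z | ∀ w, φ z + ((‖z - u‖ ^ 2 / 2 : ℝ) : EReal) ≤ φ w + ((‖w - u‖ ^ 2 / 2 : ℝ) : EReal)}

/-- A positive scaling of an extended-real-valued function. -/
def scaleE (α : ℝ) (φ : E → EReal) : E → EReal := fun x => ((α : ℝ) : EReal) * φ x

/-- `h` is locally Lipschitz differentiable on `s`. -/
def LocLipGradOn [CompleteSpace E] (h : E → ℝ) (s : Set E) : Prop :=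
  (∀ x ∈ s, DifferentiableAt ℝ h x) ∧
  ∀ x ∈ s, ∃ U ∈ 𝓝 x, ∃ L : ℝ, ∀ u ∈ U ∩ s, ∀ v ∈ U ∩ s,
    ‖gradient h u - gradient h v‖ ≤ L * ‖u - v‖

/-- The numerator `ζ = f + h`. -/
def zeta (f : E → EReal) (h : E → ℝ) (x : E) : EReal := f x + ((h x : ℝ) : EReal)

/-- `η(x,y) = ⟨x,y⟩ − g^*(y)`. -/
def eta (g : E → ℝ) (x y : E) : EReal := ((⟪x, y⟫ : ℝ) : EReal) - fconj g y

/-- The extended objective of the fractional problem. -/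
def Ffun (f : E → EReal) (g h : E → ℝ) (x : E) : EReal :=
  if g x ≠ 0 ∧ f x ≠ ⊤ then ((((f x).toReal + h x) / g x : ℝ) : EReal) else ⊤

/-- The extended objective of the reformulated problem. -/
def Qfun (f : E → EReal) (g h : E → ℝ) (x y : E) : EReal :=
  if f x ≠ ⊤ ∧ 0 < eta g x y then
    ((((f x).toReal + h x) / (eta g x y).toReal : ℝ) : EReal) else ⊤

/-- Pack a pair into the `ℓ²` product space. -/
def mk2 (x y : E) : WithLp 2 (E × E) := (WithLp.equiv 2 (E × E)).symm (x, y)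

def pr1 (p : WithLp 2 (E × E)) : E := (WithLp.equiv 2 (E × E) p).1

def pr2 (p : WithLp 2 (E × E)) : E := (WithLp.equiv 2 (E × E) p).2

/-- `Q` as a function on the `ℓ²` product space. -/
def Qpair (f : E → EReal) (g h : E → ℝ) (p : WithLp 2 (E × E)) : EReal :=
  Qfun f g h (pr1 p) (pr2 p)

/-- The blanket assumptions of the paper. -/
structure Blanket [CompleteSpace E] (f : E → EReal) (g h : E → ℝ) : Prop where
  f_proper : Proper f
  f_lsc : LowerSemicontinuous f
  f_cont : ContinuousOn f (edom f)
  f_bddBelow : ∃ m : ℝ, ∀ x, (m : EReal) ≤ f x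
  h_lsc : LowerSemicontinuous h
  h_diff : LocLipGradOn h {x | g x ≠ 0}
  g_convex : ConvexOn ℝ Set.univ g
  g_nonneg : ∀ x, 0 ≤ g x
  omega_nonempty : ∃ x, g x ≠ 0
  zeta_nonneg : ∀ x, f x ≠ ⊤ → 0 ≤ zeta f h x

/-- `x` is a critical point of `F`: `0 ∈ ∂̂f(x) + ∇h(x) − F(x)·∂g(x)`. -/
def IsCritF [CompleteSpace E] (f : E → EReal) (g h : E → ℝ) (x : E) : Prop :=
  g x ≠ 0 ∧ f x ≠ ⊤ ∧
  ∃ u ∈ frSubdiff f x, ∃ v ∈ cvxSubdiff g x,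
    u + gradient h x - (Ffun f g h x).toReal • v = 0

/-- The level set `X = {x : F(x) ≤ F(x⁰)}`. -/
def lvlSet (f : E → EReal) (g h : E → ℝ) (x0 : E) : Set E :=
  {x | Ffun f g h x ≤ Ffun f g h x0}

/-- The enlargement `X_{α̲}` of the level set. -/
def Xal (f : E → EReal) (g h : E → ℝ) (x0 : E) (αl : ℝ) : Set E :=
  {z | (Metric.infDist z (lvlSet f g h x0)) ^ 2 ≤ sSup (g '' lvlSet f g h x0) / αl}

/-- The compact set `𝒴 = ∪_{z ∈ X_{α̲}} ∂g(z)`. -/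
def Yset (f : E → EReal) (g h : E → ℝ) (x0 : E) (αl : ℝ) : Set E :=
  ⋃ z ∈ Xal f g h x0 αl, cvxSubdiff g z

/-- The set `S = {(x,y) ∈ X × 𝒴 : η(x,y) > 0}`. -/
def Sset (f : E → EReal) (g h : E → ℝ) (x0 : E) (αl : ℝ) : Set (E × E) :=
  {p | p.1 ∈ lvlSet f g h x0 ∧ p.2 ∈ Yset f g h x0 αl ∧ 0 < eta g p.1 p.2}

/-- The set of accumulation points of a sequence. -/
def accSet {X : Type*} [TopologicalSpace X] (pt : ℕ → X) : Set X :=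
  {p | ∃ σ : ℕ → ℕ, StrictMono σ ∧ Tendsto (pt ∘ σ) atTop (𝓝 p)}

/-- A polyhedral function: its epigraph is a finite intersection of closed half-spaces. -/
def IsPolyhedralFn (φ : E → EReal) : Prop :=
  ∃ (m : ℕ) (w : Fin m → E) (c b : Fin m → ℝ),
    ∀ (x : E) (a : ℝ), (φ x ≤ (a : EReal) ↔ ∀ i, ⟪w i, x⟫ + c i * a ≤ b i)



lemma subdiff_ineq {g : E → ℝ} {z y : E} (hy : y ∈ cvxSubdiff g z) (x : E) :
    ⟪x, y⟫ - g x ≤ ⟪z, y⟫ - g z := by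
  have h1 := hy x
  have h2 : ⟪y, x - z⟫ = ⟪x, y⟫ - ⟪z, y⟫ := by
    rw [inner_sub_right, real_inner_comm y x, real_inner_comm y z]
  linarith

lemma fconj_eq {g : E → ℝ} {z y : E} (hy : y ∈ cvxSubdiff g z) :
    fconj g y = ((⟪z, y⟫ - g z : ℝ) : EReal) := by
  unfold fconj fconjE
  apply le_antisymm
  · apply iSup_le
    intro x
    rw [← EReal.coe_sub]
    exact EReal.coe_le_coe_iff.mpr (subdiff_ineq hy x)
  · have h := le_iSup (fun x => (((⟪x, y⟫ : ℝ) : EReal) - ((g x : ℝ) : EReal))) z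
    rw [← EReal.coe_sub] at h
    exact h

lemma fconj_toReal {g : E → ℝ} {z y : E} (hy : y ∈ cvxSubdiff g z) :
    (fconj g y).toReal = ⟪z, y⟫ - g z := by
  rw [fconj_eq hy, EReal.toReal_coe]

lemma eta_coe {g : E → ℝ} {z y : E} (hy : y ∈ cvxSubdiff g z) (x : E) :
    eta g x y = ((⟪x, y⟫ - (fconj g y).toReal : ℝ) : EReal) := by
  rw [eta, fconj_eq hy, EReal.toReal_coe, ← EReal.coe_sub]

lemma eta_toReal {g : E → ℝ} {z y : E} (hy : y ∈ cvxSubdiff g z) (x : E) :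
    (eta g x y).toReal = ⟪x, y⟫ - (fconj g y).toReal := by
  rw [eta_coe hy, EReal.toReal_coe]

/-- `η` is Lipschitz on `X × 𝒴`, `g^*` is Lipschitz on `𝒴`,
and `Q` is continuous on `S`. -/
theorem statement15 {n : ℕ} (f : EuclideanSpace ℝ (Fin n) → EReal)
    (g h : EuclideanSpace ℝ (Fin n) → ℝ) (hb : Blanket f g h)
    (x0 : EuclideanSpace ℝ (Fin n)) (hx0 : Ffun f g h x0 ≠ ⊤)
    (hne : (lvlSet f g h x0).Nonempty) (hcomp : IsCompact (lvlSet f g h x0))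
    (αl : ℝ) (hαl : 0 < αl) :
    (∀ y ∈ Yset f g h x0 αl, fconj g y ≠ ⊤) ∧
    (∃ K : ℝ, 0 ≤ K ∧ ∀ x₁ ∈ lvlSet f g h x0, ∀ x₂ ∈ lvlSet f g h x0,
        ∀ y₁ ∈ Yset f g h x0 αl, ∀ y₂ ∈ Yset f g h x0 αl,
          |(eta g x₁ y₁).toReal - (eta g x₂ y₂).toReal| ≤ K * ‖mk2 x₁ y₁ - mk2 x₂ y₂‖) ∧
    (∀ y₁ ∈ Yset f g h x0 αl, ∀ y₂ ∈ Yset f g h x0 αl,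
        |(fconj g y₁).toReal - (fconj g y₂).toReal| ≤
          (sSup ((fun x : EuclideanSpace ℝ (Fin n) => ‖x‖) '' lvlSet f g h x0) +
            Real.sqrt (sSup (g '' lvlSet f g h x0) / αl)) * ‖y₁ - y₂‖) ∧
    ContinuousOn (Qpair f g h)
      ((fun p : EuclideanSpace ℝ (Fin n) × EuclideanSpace ℝ (Fin n) => mk2 p.1 p.2) ''
        Sset f g h x0 αl) := by
  classical
  set X := lvlSet f g h x0 with hXdef
  have gcont : Continuous g := by
    have h1 := hb.g_convex.continuousOn isOpen_univ
    exact continuousOn_univ.mp h1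
  obtain ⟨xw, hxw⟩ := id hne
  set Mx := sSup ((fun x : EuclideanSpace ℝ (Fin n) => ‖x‖) '' X) with hMxdef
  have hMx : ∀ x ∈ X, ‖x‖ ≤ Mx := fun x hx =>
    le_csSup (hcomp.image continuous_norm).bddAbove ⟨x, hx, rfl⟩
  have hMx0 : 0 ≤ Mx := le_trans (norm_nonneg xw) (hMx xw hxw)
  set gbar := sSup (g '' X) with hgbardef
  have hgbar : ∀ x ∈ X, g x ≤ gbar := fun x hx =>
    le_csSup (hcomp.image gcont).bddAbove ⟨x, hx, rfl⟩
  have hgbar0 : 0 ≤ gbar := le_trans (hb.g_nonneg xw) (hgbar xw hxw)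
  set L := Mx + Real.sqrt (gbar / αl) with hLdef
  have hL0 : 0 ≤ L := add_nonneg hMx0 (Real.sqrt_nonneg _)
  -- every point of the enlarged level set has norm at most L
  have hzbound : ∀ z ∈ Xal f g h x0 αl, ‖z‖ ≤ L := by
    intro z hz
    obtain ⟨x, hxX, hdx⟩ := hcomp.exists_infDist_eq_dist hne z
    have h1 : Metric.infDist z X ^ 2 ≤ gbar / αl := hz
    have h2 : Metric.infDist z X ≤ Real.sqrt (gbar / αl) := by
      rw [show Metric.infDist z X = Real.sqrt (Metric.infDist z X ^ 2) from
        (Real.sqrt_sq Metric.infDist_nonneg).symm]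
      exact Real.sqrt_le_sqrt h1
    have h3 : ‖z‖ ≤ ‖x‖ + ‖z - x‖ := by
      have := norm_add_le x (z - x)
      simpa using this
    have h4 : dist z x ≤ Real.sqrt (gbar / αl) := hdx ▸ h2
    rw [dist_eq_norm] at h4
    have h5 := hMx x hxX
    rw [hLdef]
    linarith
  have hYmem : ∀ y ∈ Yset f g h x0 αl, ∃ z, ‖z‖ ≤ L ∧ y ∈ cvxSubdiff g z := by
    intro y hy
    rcases mem_iUnion₂.mp hy with ⟨z, hz, hyz⟩
    exact ⟨z, hzbound z hz, hyz⟩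
  -- Part 1 : g^* is finite on 𝒴
  have part1 : ∀ y ∈ Yset f g h x0 αl, fconj g y ≠ ⊤ := by
    intro y hy
    obtain ⟨z, _, hyz⟩ := hYmem y hy
    rw [fconj_eq hyz]
    exact EReal.coe_ne_top _
  -- Part 3 : g^* is Lipschitz on 𝒴
  have part3 : ∀ y₁ ∈ Yset f g h x0 αl, ∀ y₂ ∈ Yset f g h x0 αl,
      |(fconj g y₁).toReal - (fconj g y₂).toReal| ≤ L * ‖y₁ - y₂‖ := by
    intro y₁ hy₁ y₂ hy₂
    obtain ⟨z₁, hz₁L, hz₁⟩ := hYmem y₁ hy₁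
    obtain ⟨z₂, hz₂L, hz₂⟩ := hYmem y₂ hy₂
    rw [fconj_toReal hz₁, fconj_toReal hz₂]
    have k1 := subdiff_ineq hz₁ z₂
    have k2 := subdiff_ineq hz₂ z₁
    have e1 : ⟪z₁, y₁ - y₂⟫ = ⟪z₁, y₁⟫ - ⟪z₁, y₂⟫ := inner_sub_right _ _ _
    have e2 : ⟪z₂, y₁ - y₂⟫ = ⟪z₂, y₁⟫ - ⟪z₂, y₂⟫ := inner_sub_right _ _ _
    have i1 : |⟪z₁, y₁ - y₂⟫| ≤ L * ‖y₁ - y₂‖ :=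
      (abs_real_inner_le_norm _ _).trans (mul_le_mul_of_nonneg_right hz₁L (norm_nonneg _))
    have i2 : |⟪z₂, y₁ - y₂⟫| ≤ L * ‖y₁ - y₂‖ :=
      (abs_real_inner_le_norm _ _).trans (mul_le_mul_of_nonneg_right hz₂L (norm_nonneg _))
    obtain ⟨i1a, i1b⟩ := abs_le.mp i1
    obtain ⟨i2a, i2b⟩ := abs_le.mp i2
    rw [abs_le]
    constructor
    · linarith
    · linarith
  -- bound on 𝒴
  obtain ⟨w₀, hw₀mem, hw₀⟩ :=
    (isCompact_closedBall (0 : EuclideanSpace ℝ (Fin n)) (L + 1)).exists_isMaxOn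
      ⟨0, Metric.mem_closedBall_self (by linarith)⟩ gcont.continuousOn
  set My := g w₀ with hMydef
  have hMy0 : 0 ≤ My := hb.g_nonneg w₀
  have hMy : ∀ y ∈ Yset f g h x0 αl, ‖y‖ ≤ My := by
    intro y hy
    obtain ⟨z, hzL, hyz⟩ := hYmem y hy
    rcases eq_or_ne y 0 with rfl | hy0
    · simpa using hMy0
    · have hni : 0 < ‖y‖ := norm_pos_iff.mpr hy0
      set u := ‖y‖⁻¹ • y with hu_def
      have hnu : ‖u‖ = 1 := by
        rw [hu_def, norm_smul, Real.norm_eq_abs, abs_inv, abs_norm]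
        exact inv_mul_cancel₀ (ne_of_gt hni)
      have hu : ⟪y, u⟫ = ‖y‖ := by
        rw [hu_def, real_inner_smul_right, real_inner_self_eq_norm_mul_norm]
        field_simp
      have hsub := hyz (z + u)
      have hzuz : z + u - z = u := by abel
      rw [hzuz, hu] at hsub
      have hzu : z + u ∈ Metric.closedBall (0 : EuclideanSpace ℝ (Fin n)) (L + 1) := by
        rw [Metric.mem_closedBall, dist_zero_right]
        have := norm_add_le z u
        rw [hnu] at this
        linarith
      have hmax : g (z + u) ≤ g w₀ := hw₀ hzu
      have hgz := hb.g_nonneg z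
      simp only [hMydef]
      linarith
  -- norms of the two components are dominated by the ℓ² norm of the pair
  have hmk2sub : ∀ a b c d : EuclideanSpace ℝ (Fin n),
      mk2 a b - mk2 c d = mk2 (a - c) (b - d) := fun _ _ _ _ => rfl
  have hfst : ∀ a b : EuclideanSpace ℝ (Fin n), ‖a‖ ≤ ‖mk2 a b‖ := by
    intro a b
    have h2 : ‖mk2 a b‖ ^ 2 = ‖a‖ ^ 2 + ‖b‖ ^ 2 := WithLp.prod_norm_sq_eq_of_L2 _
    nlinarith [norm_nonneg (mk2 a b), norm_nonneg a, norm_nonneg b]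
  have hsnd : ∀ a b : EuclideanSpace ℝ (Fin n), ‖b‖ ≤ ‖mk2 a b‖ := by
    intro a b
    have h2 : ‖mk2 a b‖ ^ 2 = ‖a‖ ^ 2 + ‖b‖ ^ 2 := WithLp.prod_norm_sq_eq_of_L2 _
    nlinarith [norm_nonneg (mk2 a b), norm_nonneg a, norm_nonneg b]
  -- Part 2 : η is Lipschitz on X × 𝒴
  set K := Mx + My + L with hKdef
  have part2 : ∀ x₁ ∈ X, ∀ x₂ ∈ X, ∀ y₁ ∈ Yset f g h x0 αl, ∀ y₂ ∈ Yset f g h x0 αl,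
      |(eta g x₁ y₁).toReal - (eta g x₂ y₂).toReal| ≤ K * ‖mk2 x₁ y₁ - mk2 x₂ y₂‖ := by
    intro x₁ hx₁ x₂ hx₂ y₁ hy₁ y₂ hy₂
    obtain ⟨z₁, hz₁L, hz₁⟩ := hYmem y₁ hy₁
    obtain ⟨z₂, hz₂L, hz₂⟩ := hYmem y₂ hy₂
    rw [eta_toReal hz₁, eta_toReal hz₂]
    have hnx : ‖x₁ - x₂‖ ≤ ‖mk2 x₁ y₁ - mk2 x₂ y₂‖ := by
      rw [hmk2sub]; exact hfst _ _
    have hny : ‖y₁ - y₂‖ ≤ ‖mk2 x₁ y₁ - mk2 x₂ y₂‖ := by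
      rw [hmk2sub]; exact hsnd _ _
    have hc := part3 y₁ hy₁ y₂ hy₂
    have e1 : ⟪x₁, y₁⟫ - ⟪x₂, y₂⟫ = ⟪x₁, y₁ - y₂⟫ + ⟪x₁ - x₂, y₂⟫ := by
      rw [inner_sub_right, inner_sub_left]; ring
    have i1 : |⟪x₁, y₁ - y₂⟫| ≤ Mx * ‖y₁ - y₂‖ :=
      (abs_real_inner_le_norm _ _).trans (mul_le_mul_of_nonneg_right (hMx _ hx₁) (norm_nonneg _))
    have i2 : |⟪x₁ - x₂, y₂⟫| ≤ My * ‖x₁ - x₂‖ := by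
      refine (abs_real_inner_le_norm _ _).trans ?_
      calc ‖x₁ - x₂‖ * ‖y₂‖ ≤ ‖x₁ - x₂‖ * My :=
            mul_le_mul_of_nonneg_left (hMy _ hy₂) (norm_nonneg _)
        _ = My * ‖x₁ - x₂‖ := mul_comm _ _
    obtain ⟨i1a, i1b⟩ := abs_le.mp i1
    obtain ⟨i2a, i2b⟩ := abs_le.mp i2
    obtain ⟨hca, hcb⟩ := abs_le.mp hc
    have b1 : Mx * ‖y₁ - y₂‖ ≤ Mx * ‖mk2 x₁ y₁ - mk2 x₂ y₂‖ :=
      mul_le_mul_of_nonneg_left hny hMx0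
    have b2 : My * ‖x₁ - x₂‖ ≤ My * ‖mk2 x₁ y₁ - mk2 x₂ y₂‖ :=
      mul_le_mul_of_nonneg_left hnx hMy0
    have b3 : L * ‖y₁ - y₂‖ ≤ L * ‖mk2 x₁ y₁ - mk2 x₂ y₂‖ :=
      mul_le_mul_of_nonneg_left hny hL0
    have hKP : K * ‖mk2 x₁ y₁ - mk2 x₂ y₂‖ =
        Mx * ‖mk2 x₁ y₁ - mk2 x₂ y₂‖ + My * ‖mk2 x₁ y₁ - mk2 x₂ y₂‖ +
          L * ‖mk2 x₁ y₁ - mk2 x₂ y₂‖ := by rw [hKdef]; ring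
    rw [abs_le]
    constructor
    · linarith
    · linarith
  -- membership in the level set forces the domain conditions
  have hXcond : ∀ x ∈ X, g x ≠ 0 ∧ f x ≠ ⊤ := by
    intro x hx
    by_contra hcnd
    have hfx : Ffun f g h x = ⊤ := by rw [Ffun, if_neg hcnd]
    have hle : Ffun f g h x ≤ Ffun f g h x0 := hx
    rw [hfx] at hle
    exact hx0 (top_le_iff.mp hle)
  -- Part 4 : continuity of Q on S
  have hpr1cont : Continuous
      (pr1 : WithLp 2 (EuclideanSpace ℝ (Fin n) × EuclideanSpace ℝ (Fin n)) → _) :=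
    continuous_fst.comp (WithLp.prod_continuous_ofLp _ _ _)
  have hpr2cont : Continuous
      (pr2 : WithLp 2 (EuclideanSpace ℝ (Fin n) × EuclideanSpace ℝ (Fin n)) → _) :=
    continuous_snd.comp (WithLp.prod_continuous_ofLp _ _ _)
  set S' := ((fun p : EuclideanSpace ℝ (Fin n) × EuclideanSpace ℝ (Fin n) => mk2 p.1 p.2) ''
      Sset f g h x0 αl) with hS'
  have hS'spec : ∀ q ∈ S',
      pr1 q ∈ X ∧ pr2 q ∈ Yset f g h x0 αl ∧ 0 < eta g (pr1 q) (pr2 q) := by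
    rintro q ⟨⟨x, y⟩, hxy, rfl⟩
    exact ⟨hxy.1, hxy.2.1, hxy.2.2⟩
  have hDeta : ∀ q ∈ S', eta g (pr1 q) (pr2 q) =
      ((⟪pr1 q, pr2 q⟫ - (fconj g (pr2 q)).toReal : ℝ) : EReal) := by
    intro q hq
    obtain ⟨z, _, hz⟩ := hYmem _ (hS'spec q hq).2.1
    exact eta_coe hz _
  have hDpos : ∀ q ∈ S', 0 < ⟪pr1 q, pr2 q⟫ - (fconj g (pr2 q)).toReal := by
    intro q hq
    have hp := (hS'spec q hq).2.2
    rw [hDeta q hq] at hp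
    exact EReal.coe_pos.mp hp
  have hQeq : ∀ q ∈ S', Qpair f g h q =
      ((((f (pr1 q)).toReal + h (pr1 q)) /
        (⟪pr1 q, pr2 q⟫ - (fconj g (pr2 q)).toReal) : ℝ) : EReal) := by
    intro q hq
    obtain ⟨hx, hy, hpos⟩ := hS'spec q hq
    have hft := (hXcond _ hx).2
    have hq1 : Qpair f g h q = Qfun f g h (pr1 q) (pr2 q) := rfl
    rw [hq1, Qfun, if_pos ⟨hft, hpos⟩]
    have ht : (eta g (pr1 q) (pr2 q)).toReal =
        ⟪pr1 q, pr2 q⟫ - (fconj g (pr2 q)).toReal := by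
      rw [hDeta q hq, EReal.toReal_coe]
    rw [ht]
  have hLip : LipschitzOnWith (Real.toNNReal L)
      (fun y => (fconj g y).toReal) (Yset f g h x0 αl) := by
    apply LipschitzOnWith.of_dist_le_mul
    intro y₁ hy₁ y₂ hy₂
    rw [Real.dist_eq, dist_eq_norm, Real.coe_toNNReal L hL0]
    exact part3 y₁ hy₁ y₂ hy₂
  have hconjcont : ContinuousOn (fun y => (fconj g y).toReal) (Yset f g h x0 αl) :=
    hLip.continuousOn
  have hconjcomp : ContinuousOn (fun q => (fconj g (pr2 q)).toReal) S' := by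
    intro q hq
    exact (hconjcont _ (hS'spec q hq).2.1).comp hpr2cont.continuousWithinAt
      (fun r hr => (hS'spec r hr).2.1)
  have hDcont : ContinuousOn
      (fun q => ⟪pr1 q, pr2 q⟫ - (fconj g (pr2 q)).toReal) S' :=
    ((hpr1cont.inner hpr2cont).continuousOn).sub hconjcomp
  have hNcont : ContinuousOn (fun q => (f (pr1 q)).toReal + h (pr1 q)) S' := by
    intro q hq
    obtain ⟨hx, -, -⟩ := hS'spec q hq
    have hft := (hXcond _ hx).2
    have hgx := (hXcond _ hx).1
    apply ContinuousWithinAt.add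
    · have h1 : ContinuousWithinAt f (edom f) (pr1 q) := hb.f_cont _ hft
      have h4 : ContinuousWithinAt (fun r => f (pr1 r)) S' q :=
        h1.comp hpr1cont.continuousWithinAt
          (fun r hr => (hXcond _ (hS'spec r hr).1).2)
      exact (EReal.tendsto_toReal hft (hb.f_proper.2 _)).comp h4
    · exact ((hb.h_diff.1 _ hgx).continuousAt.comp hpr1cont.continuousAt).continuousWithinAt
  have part4 : ContinuousOn (Qpair f g h) S' := by
    have hr : ContinuousOn (fun q =>
        ((((f (pr1 q)).toReal + h (pr1 q)) /
          (⟪pr1 q, pr2 q⟫ - (fconj g (pr2 q)).toReal) : ℝ) : EReal)) S' :=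
      continuous_coe_real_ereal.comp_continuousOn
        (hNcont.div hDcont (fun q hq => ne_of_gt (hDpos q hq)))
    exact hr.congr hQeq
  exact ⟨part1, ⟨K, add_nonneg (add_nonneg hMx0 hMy0) hL0, part2⟩, part3, part4⟩

end Paper
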